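/- arXiv:2005.02734 — 3 statements merged into one kernel-verified Lean document; each statement's English description precedes it below -/
import Mathlib

section
/- For all real numbers X ≥ 0 and Y ≥ 0, one has |exp(−X) − exp(−Y)| / √(exp(−X) + exp(−Y)) ≤ |Y − X|. -/
lemma key_aux (X Y : ℝ) (hX : 0 ≤ X) (hXY : X ≤ Y) :
    Real.exp (-X) - Real.exp (-Y) ≤ (Y - X) * Real.sqrt (Real.exp (-X) + Real.exp (-Y)) := by
  have h1 : Real.exp (-X) - Real.exp (-Y) ≤ (Y - X) * Real.exp (-X) := by
    have := Real.add_one_le_exp (X - Y)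
    have h2 : Real.exp (-Y) = Real.exp (X - Y) * Real.exp (-X) := by
      rw [← Real.exp_add]; ring_nf
    have hp := Real.exp_pos (-X)
    nlinarith
  have hle1 : Real.exp (-X) ≤ 1 := Real.exp_le_one_iff.mpr (by linarith)
  have h3 : Real.exp (-X) ≤ Real.sqrt (Real.exp (-X) + Real.exp (-Y)) := by
    rw [Real.le_sqrt (Real.exp_pos _).le]
    nlinarith [Real.exp_pos (-Y), Real.exp_pos (-X)]
    positivity
  calc Real.exp (-X) - Real.exp (-Y) ≤ (Y - X) * Real.exp (-X) := h1
    _ ≤ (Y - X) * Real.sqrt (Real.exp (-X) + Real.exp (-Y)) := by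
        apply mul_le_mul_of_nonneg_left h3 (by linarith)

theorem exp_diff_div_sqrt_sum_le (X Y : ℝ) (hX : 0 ≤ X) (hY : 0 ≤ Y) :
    |Real.exp (-X) - Real.exp (-Y)| / Real.sqrt (Real.exp (-X) + Real.exp (-Y))
      ≤ |Y - X| := by
  have hspos : 0 < Real.sqrt (Real.exp (-X) + Real.exp (-Y)) :=
    Real.sqrt_pos.mpr (by positivity)
  rw [div_le_iff₀ hspos]
  rcases le_total X Y with h | h
  · have hm : Real.exp (-Y) ≤ Real.exp (-X) := Real.exp_le_exp.mpr (by linarith)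
    rw [abs_of_nonneg (by linarith), abs_of_nonneg (by linarith)]
    exact key_aux X Y hX h
  · have hm : Real.exp (-X) ≤ Real.exp (-Y) := Real.exp_le_exp.mpr (by linarith)
    rw [abs_of_nonpos (by linarith), abs_of_nonpos (by linarith)]
    have := key_aux Y X hY h
    rw [add_comm (Real.exp (-Y))] at this
    linarith
end

section
/- For all real numbers u₁ ≥ 0, u₂ ≥ 0, v₁ ≥ 0, v₂ ≥ 0, one has (u₁ − u₂)·(u₂·exp(−v₂) − u₁·exp(−v₁)) ≤ (1/8)·(u₁ + u₂)²·(v₁ − v₂)². -/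
lemma exp_diff_sq_le (v₁ v₂ : ℝ) (hv₁ : 0 ≤ v₁) (hv₂ : 0 ≤ v₂) (h : v₂ ≤ v₁) :
    (Real.exp (-v₁) - Real.exp (-v₂)) ^ 2
      ≤ (v₁ - v₂) ^ 2 * (Real.exp (-v₁) + Real.exp (-v₂)) := by
  set a := Real.exp (-v₁) with ha
  set b := Real.exp (-v₂) with hb
  have hapos : 0 < a := Real.exp_pos _
  have hbpos : 0 < b := Real.exp_pos _
  have hb1 : b ≤ 1 := Real.exp_le_one_iff.mpr (by linarith)
  have hab : a ≤ b := Real.exp_le_exp.mpr (by linarith)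
  -- b - a ≤ b * (v₁ - v₂)
  have hprod : a = b * Real.exp (-(v₁ - v₂)) := by
    rw [ha, hb, ← Real.exp_add]; ring_nf
  have hexp : 1 - (v₁ - v₂) ≤ Real.exp (-(v₁ - v₂)) := by
    have := Real.add_one_le_exp (-(v₁ - v₂)); linarith
  have h1 : b - a ≤ b * (v₁ - v₂) := by
    rw [hprod]
    nlinarith [hbpos]
  have h2 : (b - a) ^ 2 ≤ (b * (v₁ - v₂)) ^ 2 := by
    have h0 : 0 ≤ b - a := sub_nonneg.mpr hab
    have h0' : 0 ≤ b * (v₁ - v₂) := mul_nonneg hbpos.le (by linarith)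
    nlinarith [h1, h0, h0']
  nlinarith [h2, mul_nonneg (mul_nonneg hbpos.le (sub_nonneg.mpr hb1)) (sq_nonneg (v₁ - v₂)),
    mul_nonneg hapos.le (sq_nonneg (v₁ - v₂))]

lemma exp_diff_sq_le' (v₁ v₂ : ℝ) (hv₁ : 0 ≤ v₁) (hv₂ : 0 ≤ v₂) :
    (Real.exp (-v₁) - Real.exp (-v₂)) ^ 2
      ≤ (v₁ - v₂) ^ 2 * (Real.exp (-v₁) + Real.exp (-v₂)) := by
  rcases le_total v₂ v₁ with h | h
  · exact exp_diff_sq_le v₁ v₂ hv₁ hv₂ h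
  · have := exp_diff_sq_le v₂ v₁ hv₂ hv₁ h
    nlinarith [this]

theorem uniqueness_pointwise_core (u₁ u₂ v₁ v₂ : ℝ)
    (hu₁ : 0 ≤ u₁) (hu₂ : 0 ≤ u₂) (hv₁ : 0 ≤ v₁) (hv₂ : 0 ≤ v₂) :
    (u₁ - u₂) * (u₂ * Real.exp (-v₂) - u₁ * Real.exp (-v₁))
      ≤ (1 / 8) * (u₁ + u₂) ^ 2 * (v₁ - v₂) ^ 2 := by
  set a := Real.exp (-v₁) with ha
  set b := Real.exp (-v₂) with hb
  have hapos : 0 < a := Real.exp_pos _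
  have hbpos : 0 < b := Real.exp_pos _
  have key : (a - b) ^ 2 ≤ (v₁ - v₂) ^ 2 * (a + b) := exp_diff_sq_le' v₁ v₂ hv₁ hv₂
  have hkey2 : (u₁ + u₂) ^ 2 * (a - b) ^ 2 ≤ (u₁ + u₂) ^ 2 * ((v₁ - v₂) ^ 2 * (a + b)) :=
    mul_le_mul_of_nonneg_left key (by positivity)
  nlinarith [sq_nonneg (2 * (a + b) * (u₁ - u₂) + (u₁ + u₂) * (a - b)),
    mul_pos hapos hbpos, sq_nonneg (u₁ - u₂), sq_nonneg ((u₁ + u₂) * (v₁ - v₂)),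
    mul_nonneg (mul_nonneg hapos.le hbpos.le) (sq_nonneg (u₁ - u₂))]
end

section
/- Let E be a real inner product space, x ∈ E, δ > 0, and let u, g : E → ℝ be differentiable at x with u(x) ≥ 0. Then ⟪∇(y ↦ exp(−g(y))·u(y))(x), ∇(y ↦ exp(−g(y))·(δ + u(y)))(x)⟫ / (exp(−g(x))·(δ + u(x))) = 4·‖∇(y ↦ Real.sqrt (exp(−g(y))·(δ + u(y))))(x)‖² + (δ/(δ + u(x)))·⟪∇g(x), ∇(y ↦ exp(−g(y))·(δ + u(y)))(x)⟫, where ∇f(x) denotes the gradient of f : E → ℝ at x (the vector representing the Fréchet derivative) and ⟪·,·⟫ the inner product of E. -/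
open Real

lemma hasGradientAt_comp_scalar {E : Type*} [NormedAddCommGroup E] [InnerProductSpace ℝ E]
    [CompleteSpace E] {f : E → ℝ} {f' : E} {x : E} {h : ℝ → ℝ} {c : ℝ}
    (hf : HasGradientAt f f' x) (hh : HasDerivAt h c (f x)) :
    HasGradientAt (fun y => h (f y)) (c • f') x := by
  rw [hasGradientAt_iff_hasFDerivAt]
  have := hh.comp_hasFDerivAt x hf.hasFDerivAt
  have h2 : (InnerProductSpace.toDual ℝ E) (c • f') = c • (InnerProductSpace.toDual ℝ E) f' := by
    simp
  rw [h2]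
  exact this

theorem approximate_entropy_dissipation_decomposition
    {E : Type*} [NormedAddCommGroup E] [InnerProductSpace ℝ E] [CompleteSpace E]
    (x : E) (δ : ℝ) (hδ : 0 < δ) (u g : E → ℝ)
    (hu : DifferentiableAt ℝ u x) (hg : DifferentiableAt ℝ g x) (hux : 0 ≤ u x) :
    (inner ℝ (gradient (fun y => Real.exp (-g y) * u y) x)
          (gradient (fun y => Real.exp (-g y) * (δ + u y)) x) : ℝ)
        / (Real.exp (-g x) * (δ + u x))
      = 4 * ‖gradient (fun y => Real.sqrt (Real.exp (-g y) * (δ + u y))) x‖ ^ 2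
        + (δ / (δ + u x)) *
            (inner ℝ (gradient g x)
              (gradient (fun y => Real.exp (-g y) * (δ + u y)) x) : ℝ) := by
  set G := gradient g x with hG
  have hgG : HasGradientAt g G x := hg.hasGradientAt
  set w : E → ℝ := fun y => Real.exp (-g y) * (δ + u y) with hwdef
  have hwx : 0 < w x := mul_pos (Real.exp_pos _) (by linarith)
  have hwdiff : DifferentiableAt ℝ w x := (hg.neg.exp).mul ((differentiableAt_const δ).add hu)
  set W := gradient w x with hW
  have hw : HasGradientAt w W x := hwdiff.hasGradientAt
  -- gradient of e^{-g}
  have hE : HasGradientAt (fun y => Real.exp (-g y)) ((-Real.exp (-g x)) • G) x := by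
    have hneg : HasGradientAt (fun y => -g y) (-G) x := by
      rw [hasGradientAt_iff_hasFDerivAt]
      have := hgG.hasFDerivAt.neg
      have h2 : (InnerProductSpace.toDual ℝ E) (-G) = -(InnerProductSpace.toDual ℝ E) G := by simp
      rw [h2]; exact this
    have := hasGradientAt_comp_scalar hneg (Real.hasDerivAt_exp (-g x))
    simpa [smul_smul] using this
  -- gradient of e^{-g} u
  have hF : HasGradientAt (fun y => Real.exp (-g y) * u y)
      (W + (δ * Real.exp (-g x)) • G) x := by
    have heq : (fun y => Real.exp (-g y) * u y) = fun y => w y - δ * Real.exp (-g y) := by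
      funext y; simp only [hwdef]; ring
    rw [heq, hasGradientAt_iff_hasFDerivAt]
    have := hw.hasFDerivAt.sub ((hE.hasFDerivAt).const_mul δ)
    have h2 : (InnerProductSpace.toDual ℝ E) (W + (δ * Real.exp (-g x)) • G)
        = (InnerProductSpace.toDual ℝ E) W
          - δ • (InnerProductSpace.toDual ℝ E) ((-Real.exp (-g x)) • G) := by
      simp [map_add, map_smul, smul_smul, sub_eq_add_neg]
    rw [h2]; exact this
  -- gradient of sqrt ∘ w
  have hS : HasGradientAt (fun y => Real.sqrt (w y)) ((1 / (2 * Real.sqrt (w x))) • W) x :=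
    hasGradientAt_comp_scalar hw (Real.hasDerivAt_sqrt hwx.ne')
  rw [hF.gradient, hS.gradient]
  have hsq : Real.sqrt (w x) ^ 2 = w x := Real.sq_sqrt hwx.le
  have hsqpos : 0 < Real.sqrt (w x) := Real.sqrt_pos.mpr hwx
  rw [inner_add_left, real_inner_smul_left, norm_smul, real_inner_self_eq_norm_sq]
  have hwx' : w x = Real.exp (-g x) * (δ + u x) := rfl
  rw [mul_pow, ← hwx']
  have h1 : ‖(1 / (2 * Real.sqrt (w x)))‖ ^ 2 = 1 / (4 * w x) := by
    rw [Real.norm_eq_abs, sq_abs]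
    field_simp
    rw [hsq]; ring
  rw [h1]
  have hδu : δ / (δ + u x) = (δ * Real.exp (-g x)) / w x := by
    rw [hwx']
    field_simp
  rw [hδu]
  field_simp
end
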